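/- Let A₂ = !![1,-a; 1,-b] as a complex 2×2 matrix and B = !![1,0,-a,0; 0,1,0,-a; 1,0,-b,0; 0,1,0,-b] as a complex 4×4 matrix, where a, b are real. Then the numerical range of B equals the numerical range of A₂, i.e. {⟪u, B u⟫ : ‖u‖ = 1, u ∈ ℂ⁴} = {⟪v, A₂ v⟫ : ‖v‖ = 1, v ∈ ℂ²}. -/

import Mathlib

open Matrix ComplexConjugate

noncomputable def nn {ι : Type*} [Fintype ι] (u : ι → ℂ) : ℝ := ∑ i, Complex.normSq (u i)

variable {ι : Type*} [Fintype ι]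

lemma dot_self_eq (u : ι → ℂ) : star u ⬝ᵥ u = (nn u : ℂ) := by
  simp only [dotProduct, nn, Pi.star_apply, Complex.star_def, Complex.ofReal_sum]
  exact Finset.sum_congr rfl fun i _ => by rw [Complex.normSq_eq_conj_mul_self]

lemma nn_nonneg (u : ι → ℂ) : 0 ≤ nn u := Finset.sum_nonneg fun i _ => Complex.normSq_nonneg _

lemma nn_eq_zero_iff (u : ι → ℂ) : nn u = 0 ↔ u = 0 := by
  constructor
  · intro h
    funext i
    have := (Finset.sum_eq_zero_iff_of_nonneg (fun i _ => Complex.normSq_nonneg (u i))).mp h i (Finset.mem_univ i)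
    simpa using Complex.normSq_eq_zero.mp this
  · rintro rfl; simp [nn]

lemma nn_smul (c : ℂ) (u : ι → ℂ) : nn (c • u) = Complex.normSq c * nn u := by
  simp [nn, Complex.normSq_mul, Finset.mul_sum]

lemma star_dot_conj (x y : ι → ℂ) : star y ⬝ᵥ x = conj (star x ⬝ᵥ y) := by
  simp only [dotProduct, Pi.star_apply, Complex.star_def, map_sum, _root_.map_mul, Complex.conj_conj]
  exact Finset.sum_congr rfl fun i _ => mul_comm _ _

lemma q_cross (A : Matrix ι ι ℂ) (c d : ℂ) (x y : ι → ℂ) :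
    star (c • x) ⬝ᵥ (A *ᵥ (d • y)) = conj c * d * (star x ⬝ᵥ (A *ᵥ y)) := by
  rw [mulVec_smul, star_smul, smul_dotProduct, dotProduct_smul]
  simp only [Complex.star_def, smul_eq_mul, Pi.smul_apply]
  ring

lemma q_smul (A : Matrix ι ι ℂ) (c : ℂ) (u : ι → ℂ) :
    star (c • u) ⬝ᵥ (A *ᵥ (c • u)) = conj c * c * (star u ⬝ᵥ (A *ᵥ u)) :=
  q_cross A c c u u

lemma q_add (A : Matrix ι ι ℂ) (x y : ι → ℂ) :
    star (x + y) ⬝ᵥ (A *ᵥ (x + y)) = star x ⬝ᵥ (A *ᵥ x) + star y ⬝ᵥ (A *ᵥ y)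
      + star x ⬝ᵥ (A *ᵥ y) + star y ⬝ᵥ (A *ᵥ x) := by
  rw [mulVec_add, star_add, add_dotProduct, dotProduct_add, dotProduct_add]
  ring

lemma n_cross (c d : ℂ) (x y : ι → ℂ) :
    star (c • x) ⬝ᵥ (d • y) = conj c * d * (star x ⬝ᵥ y) := by
  rw [star_smul, smul_dotProduct, dotProduct_smul]
  simp only [Complex.star_def, smul_eq_mul]
  ring

lemma n_add (x y : ι → ℂ) :
    star (x + y) ⬝ᵥ (x + y) = star x ⬝ᵥ x + star y ⬝ᵥ y + star x ⬝ᵥ y + star y ⬝ᵥ x := by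
  rw [star_add, add_dotProduct, dotProduct_add, dotProduct_add]
  ring

lemma key (A : Matrix ι ι ℂ) (v w : ι → ℂ) (hv : star v ⬝ᵥ v = 1) (hw : star w ⬝ᵥ w = 1)
    (hqv : star v ⬝ᵥ (A *ᵥ v) = 0) (hqw : star w ⬝ᵥ (A *ᵥ w) = 1)
    {r : ℝ} (hr : r ∈ Set.Icc (0:ℝ) 1) :
    ∃ x : ι → ℂ, star x ⬝ᵥ x = 1 ∧ star x ⬝ᵥ (A *ᵥ x) = (r : ℂ) := by
  classical
  set γ : ℂ := star v ⬝ᵥ (A *ᵥ w) - conj (star w ⬝ᵥ (A *ᵥ v)) with hγdef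
  set μ : ℂ := if γ = 0 then 1 else conj γ / (‖γ‖ : ℝ) with hμdef
  have hμ1 : conj μ * μ = 1 := by
    by_cases h : γ = 0
    · simp [hμdef, h]
    · have habs : (‖γ‖ : ℝ) ≠ 0 := by
        simpa using h
      rw [hμdef, if_neg h]
      rw [map_div₀, Complex.conj_conj, Complex.conj_ofReal]
      rw [div_mul_div_comm, Complex.mul_conj]
      rw [← Complex.ofReal_mul, ← Complex.sq_norm, sq]
      rw [div_self]
      exact_mod_cast mul_ne_zero habs habs
  have hμγ : (μ * γ).im = 0 := by
    by_cases h : γ = 0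
    · simp [h]
    · rw [hμdef, if_neg h, div_mul_eq_mul_div, mul_comm, Complex.mul_conj]
      simp [Complex.div_im]
  set w' : ι → ℂ := μ • w with hw'def
  have hw'1 : star w' ⬝ᵥ w' = 1 := by
    rw [hw'def, n_cross, hw, hμ1, mul_one]
  have hqw' : star w' ⬝ᵥ (A *ᵥ w') = 1 := by
    rw [hw'def, q_smul, hqw, hμ1, mul_one]
  have hδ1 : star v ⬝ᵥ (A *ᵥ w') + star w' ⬝ᵥ (A *ᵥ v)
      = μ * (star v ⬝ᵥ (A *ᵥ w)) + conj μ * (star w ⬝ᵥ (A *ᵥ v)) := by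
    rw [hw'def]
    have h1 : star v ⬝ᵥ (A *ᵥ (μ • w)) = μ * (star v ⬝ᵥ (A *ᵥ w)) := by
      rw [mulVec_smul, dotProduct_smul]; simp [smul_eq_mul]
    have h2 : star (μ • w) ⬝ᵥ (A *ᵥ v) = conj μ * (star w ⬝ᵥ (A *ᵥ v)) := by
      rw [star_smul, smul_dotProduct]; simp [Complex.star_def, smul_eq_mul]
    rw [h1, h2]
  have hδim : (star v ⬝ᵥ (A *ᵥ w') + star w' ⬝ᵥ (A *ᵥ v)).im = 0 := by
    have h3 : star v ⬝ᵥ (A *ᵥ w') + star w' ⬝ᵥ (A *ᵥ v)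
        = μ * γ + (conj (μ * conj (star w ⬝ᵥ (A *ᵥ v))) + μ * conj (star w ⬝ᵥ (A *ᵥ v))) := by
      rw [hδ1, hγdef, _root_.map_mul, Complex.conj_conj]; ring
    rw [h3, Complex.add_im, hμγ, Complex.add_im, Complex.conj_im]
    ring
  set d0 : ℝ := (star v ⬝ᵥ (A *ᵥ w') + star w' ⬝ᵥ (A *ᵥ v)).re with hd0
  have hδc : star v ⬝ᵥ (A *ᵥ w') + star w' ⬝ᵥ (A *ᵥ v) = (d0 : ℂ) :=
    Complex.ext (by simp [hd0]) (by simp [hδim])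
  set e0 : ℝ := 2 * (star v ⬝ᵥ w').re with he0
  have hεc : star v ⬝ᵥ w' + star w' ⬝ᵥ v = (e0 : ℂ) := by
    rw [star_dot_conj v w', Complex.add_conj, he0]
  clear_value w'
  clear hw'def hδ1 hμγ hμ1 hμdef hγdef hw hqw hd0 he0
  set p : ℝ → ι → ℂ := fun s => ((1 - s : ℝ) : ℂ) • v + ((s : ℝ) : ℂ) • w' with hpdef
  set N : ℝ → ℝ := fun s => (1-s)^2 + s^2 + s*(1-s)*e0 with hNdef
  set Q : ℝ → ℝ := fun s => s^2 + s*(1-s)*d0 with hQdef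
  have hpq : ∀ s : ℝ, star (p s) ⬝ᵥ (A *ᵥ (p s)) = (Q s : ℂ) := by
    intro s
    have h5 : star (p s) ⬝ᵥ (A *ᵥ (p s))
        = conj ((1-s:ℝ):ℂ) * ((1-s:ℝ):ℂ) * (star v ⬝ᵥ (A *ᵥ v))
          + conj ((s:ℝ):ℂ) * ((s:ℝ):ℂ) * (star w' ⬝ᵥ (A *ᵥ w'))
          + conj ((1-s:ℝ):ℂ) * ((s:ℝ):ℂ) * (star v ⬝ᵥ (A *ᵥ w'))
          + conj ((s:ℝ):ℂ) * ((1-s:ℝ):ℂ) * (star w' ⬝ᵥ (A *ᵥ v)) := by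
      rw [hpdef]
      rw [q_add, q_smul, q_smul, q_cross, q_cross]
    rw [h5, hqv, hqw', Complex.conj_ofReal, Complex.conj_ofReal, hQdef]
    push_cast
    linear_combination ((1:ℂ)-s)*s*hδc
  have hpn : ∀ s : ℝ, star (p s) ⬝ᵥ (p s) = (N s : ℂ) := by
    intro s
    have h5 : star (p s) ⬝ᵥ (p s)
        = conj ((1-s:ℝ):ℂ) * ((1-s:ℝ):ℂ) * (star v ⬝ᵥ v)
          + conj ((s:ℝ):ℂ) * ((s:ℝ):ℂ) * (star w' ⬝ᵥ w')
          + conj ((1-s:ℝ):ℂ) * ((s:ℝ):ℂ) * (star v ⬝ᵥ w')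
          + conj ((s:ℝ):ℂ) * ((1-s:ℝ):ℂ) * (star w' ⬝ᵥ v) := by
      rw [hpdef]
      rw [n_add, n_cross, n_cross, n_cross, n_cross]
    rw [h5, hv, hw'1, Complex.conj_ofReal, Complex.conj_ofReal, hNdef]
    push_cast
    linear_combination ((1:ℂ)-s)*s*hεc
  have hNnn : ∀ s : ℝ, N s = nn (p s) := by
    intro s
    have := (hpn s).symm.trans (dot_self_eq (p s))
    exact_mod_cast this
  have hNpos : ∀ s ∈ Set.Icc (0:ℝ) 1, 0 < N s := by
    intro s _
    rcases lt_or_eq_of_le (show (0:ℝ) ≤ N s by rw [hNnn s]; exact nn_nonneg _) with h | h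
    · exact h
    · exfalso
      have hp0 : p s = 0 := by
        rw [← nn_eq_zero_iff, ← hNnn s, ← h]
      have hvw : ((1 - s : ℝ) : ℂ) • v = -(((s : ℝ) : ℂ) • w') := by
        rw [hpdef] at hp0
        simp only at hp0
        exact eq_neg_of_add_eq_zero_left hp0
      have h9 := congrArg (fun u => star u ⬝ᵥ (A *ᵥ u)) hvw
      rw [show -(((s : ℝ) : ℂ) • w') = ((-s : ℝ) : ℂ) • w' by push_cast; rw [neg_smul]] at h9
      rw [q_smul, q_smul, hqv, hqw', Complex.conj_ofReal, Complex.conj_ofReal] at h9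
      have hsc : (s:ℂ) * (s:ℂ) = 0 := by push_cast at h9; linear_combination -h9
      have hs0 : s = 0 := by
        have := mul_self_eq_zero.mp hsc
        exact_mod_cast this
      rw [hs0] at hvw
      have hv0 : v = 0 := by
        simpa using hvw
      rw [hv0] at hv
      simp at hv
  set f : ℝ → ℝ := fun s => Q s / N s with hfdef
  have hf0 : f 0 = 0 := by simp [hfdef, hQdef, hNdef]
  have hf1 : f 1 = 1 := by simp [hfdef, hQdef, hNdef]
  have hcont : ContinuousOn f (Set.Icc 0 1) := by
    apply ContinuousOn.div
    · exact (by fun_prop : Continuous Q).continuousOn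
    · exact (by fun_prop : Continuous N).continuousOn
    · exact fun s hs => (hNpos s hs).ne'
  have hIVT := intermediate_value_Icc (by norm_num : (0:ℝ) ≤ 1) hcont
  rw [hf0, hf1] at hIVT
  obtain ⟨s, hsmem, hfs⟩ := hIVT hr
  have hNs := hNpos s hsmem
  set c : ℝ := (Real.sqrt (N s))⁻¹ with hcdef
  have hc2 : c * c = (N s)⁻¹ := by
    rw [hcdef, ← mul_inv]
    congr 1
    exact Real.mul_self_sqrt hNs.le
  refine ⟨(c : ℂ) • p s, ?_, ?_⟩
  · rw [n_cross, hpn s, Complex.conj_ofReal, ← Complex.ofReal_mul, ← Complex.ofReal_mul, hc2]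
    rw [← Complex.ofReal_one]
    congr 1
    field_simp
  · rw [q_smul, hpq s, Complex.conj_ofReal, ← Complex.ofReal_mul, ← Complex.ofReal_mul, hc2]
    congr 1
    rw [← hfs, hfdef]
    field_simp

lemma segmentNR [DecidableEq ι] (A : Matrix ι ι ℂ) (v w : ι → ℂ)
    (h : star v ⬝ᵥ v + star w ⬝ᵥ w = 1) :
    ∃ x : ι → ℂ, star x ⬝ᵥ x = 1 ∧
      star x ⬝ᵥ (A *ᵥ x) = star v ⬝ᵥ (A *ᵥ v) + star w ⬝ᵥ (A *ᵥ w) := by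
  have hsum : nn v + nn w = 1 := by
    have h' : ((nn v : ℂ)) + (nn w : ℂ) = 1 := by
      rw [← dot_self_eq, ← dot_self_eq]; exact h
    exact_mod_cast h'
  by_cases hv0 : v = 0
  · refine ⟨w, ?_, ?_⟩
    · have hz : star v ⬝ᵥ v = 0 := by simp [hv0]
      rw [hz, zero_add] at h; exact h
    · simp [hv0, mulVec_zero, dotProduct_zero]
  by_cases hw0 : w = 0
  · refine ⟨v, ?_, ?_⟩
    · have hz : star w ⬝ᵥ w = 0 := by simp [hw0]
      rw [hz, add_zero] at h; exact h
    · simp [hw0, mulVec_zero, dotProduct_zero]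
  set t : ℝ := nn v with ht
  have htpos : 0 < t := lt_of_le_of_ne (nn_nonneg v) fun hc => hv0 ((nn_eq_zero_iff v).mp hc.symm)
  have htw : nn w = 1 - t := by rw [ht]; linarith
  have htwpos : 0 < 1 - t := by
    rw [← htw]
    exact lt_of_le_of_ne (nn_nonneg w) fun hc => hw0 ((nn_eq_zero_iff w).mp hc.symm)
  set a : ℝ := Real.sqrt t with ha
  set b : ℝ := Real.sqrt (1 - t) with hb
  have ha2 : a * a = t := Real.mul_self_sqrt htpos.le
  have hb2 : b * b = 1 - t := Real.mul_self_sqrt htwpos.le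
  have hapos : 0 < a := Real.sqrt_pos.mpr htpos
  have hbpos : 0 < b := Real.sqrt_pos.mpr htwpos
  set vh : ι → ℂ := ((a⁻¹ : ℝ) : ℂ) • v with hvh
  set wh : ι → ℂ := ((b⁻¹ : ℝ) : ℂ) • w with hwh
  have hvdot : star v ⬝ᵥ v = (t : ℂ) := by rw [dot_self_eq, ht]
  have hwdot : star w ⬝ᵥ w = ((1 - t : ℝ) : ℂ) := by rw [dot_self_eq, htw]
  have hvh1 : star vh ⬝ᵥ vh = 1 := by
    rw [hvh, n_cross, hvdot, Complex.conj_ofReal, ← Complex.ofReal_mul, ← Complex.ofReal_mul]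
    rw [← Complex.ofReal_one]
    congr 1
    field_simp
    rw [sq]; exact ha2.symm
  have hwh1 : star wh ⬝ᵥ wh = 1 := by
    rw [hwh, n_cross, hwdot, Complex.conj_ofReal, ← Complex.ofReal_mul, ← Complex.ofReal_mul]
    rw [← Complex.ofReal_one]
    congr 1
    field_simp
    rw [sq]; exact hb2.symm
  set z1 : ℂ := star vh ⬝ᵥ (A *ᵥ vh) with hz1
  set z2 : ℂ := star wh ⬝ᵥ (A *ᵥ wh) with hz2
  have hqv : star v ⬝ᵥ (A *ᵥ v) = (t : ℂ) * z1 := by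
    have hva : v = ((a : ℝ) : ℂ) • vh := by
      rw [hvh, smul_smul, ← Complex.ofReal_mul, mul_inv_cancel₀ hapos.ne']
      simp
    rw [hva, q_smul, Complex.conj_ofReal, ← hz1]
    rw [← Complex.ofReal_mul, ha2]
  have hqw : star w ⬝ᵥ (A *ᵥ w) = ((1 - t : ℝ) : ℂ) * z2 := by
    have hwb : w = ((b : ℝ) : ℂ) • wh := by
      rw [hwh, smul_smul, ← Complex.ofReal_mul, mul_inv_cancel₀ hbpos.ne']
      simp
    rw [hwb, q_smul, Complex.conj_ofReal, ← hz2]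
    rw [← Complex.ofReal_mul, hb2]
  by_cases hz : z1 = z2
  · refine ⟨vh, hvh1, ?_⟩
    rw [← hz1, hqv, hqw, ← hz]
    push_cast
    ring
  · set d : ℂ := z2 - z1 with hd
    have hdne : d ≠ 0 := sub_ne_zero.mpr (Ne.symm hz)
    set A' : Matrix ι ι ℂ := d⁻¹ • (A - z1 • (1 : Matrix ι ι ℂ)) with hA'
    have hq' : ∀ u : ι → ℂ, star u ⬝ᵥ (A' *ᵥ u)
        = d⁻¹ * (star u ⬝ᵥ (A *ᵥ u) - z1 * (star u ⬝ᵥ u)) := by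
      intro u
      rw [hA', smul_mulVec, sub_mulVec, smul_mulVec, one_mulVec]
      rw [dotProduct_smul, dotProduct_sub, dotProduct_smul]
      simp [smul_eq_mul]
    have hq'v : star vh ⬝ᵥ (A' *ᵥ vh) = 0 := by
      rw [hq' vh, ← hz1, hvh1, mul_one, sub_self, mul_zero]
    have hq'w : star wh ⬝ᵥ (A' *ᵥ wh) = 1 := by
      rw [hq' wh, ← hz2, hwh1, mul_one, ← hd]
      exact inv_mul_cancel₀ hdne
    have hrmem : (1 - t) ∈ Set.Icc (0:ℝ) 1 := ⟨htwpos.le, by linarith⟩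
    obtain ⟨x, hx1, hx2⟩ := key A' vh wh hvh1 hwh1 hq'v hq'w hrmem
    refine ⟨x, hx1, ?_⟩
    rw [hq' x, hx1, mul_one] at hx2
    have hx3 : star x ⬝ᵥ (A *ᵥ x) = z1 + ((1 - t : ℝ) : ℂ) * d := by
      have hx4 : star x ⬝ᵥ (A *ᵥ x) - z1 = ((1 - t : ℝ) : ℂ) * d := by
        have := congrArg (fun y => d * y) hx2
        rw [← mul_assoc, mul_inv_cancel₀ hdne, one_mul] at this
        rw [this]; ring
      linear_combination hx4
    rw [hx3, hqv, hqw, hd]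
    push_cast
    ring

theorem numerical_range_B_eq_A2 (a b : ℝ)
    (B : Matrix (Fin 4) (Fin 4) ℂ)
    (hB : B = !![1, 0, -(a:ℂ), 0; 0, 1, 0, -(a:ℂ); 1, 0, -(b:ℂ), 0; 0, 1, 0, -(b:ℂ)])
    (A₂ : Matrix (Fin 2) (Fin 2) ℂ) (hA : A₂ = !![1, -(a:ℂ); 1, -(b:ℂ)]) :
    {z : ℂ | ∃ u : Fin 4 → ℂ, star u ⬝ᵥ u = 1 ∧ star u ⬝ᵥ (B *ᵥ u) = z} =
      {z : ℂ | ∃ v : Fin 2 → ℂ, star v ⬝ᵥ v = 1 ∧ star v ⬝ᵥ (A₂ *ᵥ v) = z} := by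
  ext z
  simp only [Set.mem_setOf_eq]
  constructor
  · rintro ⟨u, hu1, hu2⟩
    set v : Fin 2 → ℂ := ![u 0, u 2] with hv
    set w : Fin 2 → ℂ := ![u 1, u 3] with hw
    have hnorm : star v ⬝ᵥ v + star w ⬝ᵥ w = 1 := by
      rw [← hu1]
      simp [hv, hw, dotProduct, Fin.sum_univ_four, Fin.sum_univ_two]
      ring
    have hval : star v ⬝ᵥ (A₂ *ᵥ v) + star w ⬝ᵥ (A₂ *ᵥ w) = z := by
      rw [← hu2, hB, hA]
      simp [hv, hw, dotProduct, mulVec, Fin.sum_univ_four, Fin.sum_univ_two]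
      ring
    obtain ⟨x, hx1, hx2⟩ := segmentNR A₂ v w hnorm
    exact ⟨x, hx1, hx2.trans hval⟩
  · rintro ⟨v, hv1, hv2⟩
    refine ⟨![v 0, 0, v 1, 0], ?_, ?_⟩
    · rw [← hv1]
      simp [dotProduct, Fin.sum_univ_four, Fin.sum_univ_two]
    · rw [← hv2, hB, hA]
      simp [dotProduct, mulVec, Fin.sum_univ_four, Fin.sum_univ_two]
      try ring
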